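/- Let P be a monic hyperbolic polynomial of degree d (all roots real) with all coefficients nonzero. If the sequence of coefficients of P (from leading to constant) consists of m pluses followed by n minuses, where m+n = d+1 and 1 ≤ n ≤ m, then the number of negative roots of P whose modulus is strictly less than the modulus of the unique positive root of P is at most 2n−2. -/

import Mathlib

open Polynomial Multiset

namespace StmtAux

lemma esymm_zero' (s : Multiset ℝ) : s.esymm 0 = 1 := by
  simp [Multiset.esymm, Multiset.powersetCard_zero_left]

lemma esymm_of_card_lt {s : Multiset ℝ} {k : ℕ} (h : Multiset.card s < k) : s.esymm k = 0 := by
  rw [Multiset.esymm, Multiset.powersetCard_eq_empty _ h]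
  simp

lemma esymm_cons (a : ℝ) (s : Multiset ℝ) (k : ℕ) :
    (a ::ₘ s).esymm (k + 1) = s.esymm (k + 1) + a * s.esymm k := by
  rw [Multiset.esymm, Multiset.powersetCard_cons, Multiset.map_add, Multiset.sum_add,
    Multiset.map_map]
  congr 1
  rw [Multiset.esymm, ← Multiset.sum_map_mul_left]
  apply congrArg
  apply Multiset.map_congr rfl
  intro x _
  simp [Multiset.prod_cons]

lemma esymm_nonneg {s : Multiset ℝ} (h : ∀ x ∈ s, 0 ≤ x) (k : ℕ) : 0 ≤ s.esymm k := by
  apply Multiset.sum_nonneg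
  intro y hy
  obtain ⟨t, ht, rfl⟩ := Multiset.mem_map.mp hy
  apply Multiset.prod_nonneg
  intro x hx
  exact h x (Multiset.mem_of_le (Multiset.mem_powersetCard.mp ht).1 hx)

lemma esymm_pos {s : Multiset ℝ} (h : ∀ x ∈ s, 0 < x) {k : ℕ} (hk : k ≤ Multiset.card s) :
    0 < s.esymm k := by
  induction s using Multiset.induction generalizing k with
  | empty =>
    have : k = 0 := by simpa using hk
    subst this
    simp [esymm_zero']
  | cons a s ih =>
    match k with
    | 0 => simp [esymm_zero']
    | k + 1 =>
      rw [esymm_cons]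
      have ha : 0 < a := h a (Multiset.mem_cons_self a s)
      have hs : ∀ x ∈ s, 0 < x := fun x hx => h x (Multiset.mem_cons_of_mem hx)
      have hke : k ≤ Multiset.card s := by
        rw [Multiset.card_cons] at hk; omega
      have h1 : 0 ≤ s.esymm (k + 1) := esymm_nonneg (fun x hx => (hs x hx).le) _
      have h2 : 0 < a * s.esymm k := mul_pos ha (ih hs hke)
      linarith

lemma esymm_card (s : Multiset ℝ) : s.esymm (Multiset.card s) = s.prod := by
  induction s using Multiset.induction with
  | empty => simp [esymm_zero']
  | cons a s ih =>
    rw [Multiset.card_cons, esymm_cons, esymm_of_card_lt (by omega), ih, Multiset.prod_cons]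
    ring

lemma lemS (s : Multiset ℝ) (hs : ∀ x ∈ s, 1 < x) :
    ∀ j b : ℕ, j + b + 1 = Multiset.card s →
      ((b : ℝ) + 1) * s.esymm j < ((j : ℝ) + 1) * s.esymm (j + 1) := by
  induction s using Multiset.induction with
  | empty => intro j b h; simp at h
  | cons t w ih =>
    have ht : 1 < t := hs t (Multiset.mem_cons_self t w)
    have hw : ∀ x ∈ w, 1 < x := fun x hx => hs x (Multiset.mem_cons_of_mem hx)
    have hwnn : ∀ x ∈ w, (0:ℝ) ≤ x := fun x hx => by linarith [hw x hx]
    intro j b h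
    rw [Multiset.card_cons] at h
    match j with
    | 0 =>
      rw [esymm_zero']
      rw [show (0:ℕ)+1 = 1 from rfl, show (1:ℕ) = 0+1 from rfl, esymm_cons, esymm_zero']
      match b with
      | 0 =>
        have : Multiset.card w = 0 := by omega
        have hw0 : w = 0 := Multiset.card_eq_zero.mp this
        subst hw0
        simp [esymm_of_card_lt]
        linarith [esymm_of_card_lt (s := (0:Multiset ℝ)) (k := 1) (by simp)]
      | b + 1 =>
        have hIH := ih hw 0 b (by omega)
        rw [esymm_zero'] at hIH
        have h1 : 0 ≤ w.esymm 0 := esymm_nonneg hwnn 0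
        push_cast at hIH ⊢
        linarith
    | i + 1 =>
      have hIHi := ih hw i b (by omega)
      -- (b+2) * e_i w < (i+1) * e_{i+1} w
      have hIHi1 : (b : ℝ) * w.esymm (i+1) ≤ ((i:ℝ) + 2) * w.esymm (i + 2) := by
        match b with
        | 0 =>
          have := esymm_nonneg hwnn (i+2)
          push_cast
          nlinarith
        | b + 1 =>
          have := ih hw (i+1) b (by omega)
          push_cast at this ⊢
          nlinarith
      rw [esymm_cons, esymm_cons]
      have hE1 : 0 ≤ w.esymm (i+1) := esymm_nonneg hwnn _
      have hE0 : 0 ≤ w.esymm i := esymm_nonneg hwnn _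
      push_cast at hIHi ⊢
      nlinarith [mul_lt_mul_of_pos_left hIHi (show (0:ℝ) < t by linarith)]

lemma inc_add (r : Multiset ℝ) (hr : ∀ x ∈ r, 0 < x) (b : Multiset ℝ) (hb : ∀ x ∈ b, 0 ≤ x)
    (k : ℕ) (h : ∀ i ≤ k, b.esymm i < b.esymm (i + 1)) :
    ∀ i ≤ k, (b + r).esymm i < (b + r).esymm (i + 1) := by
  induction r using Multiset.induction with
  | empty => simpa using h
  | cons t w ih =>
    have ht : 0 < t := hr t (Multiset.mem_cons_self t w)
    have hw : ∀ x ∈ w, 0 < x := fun x hx => hr x (Multiset.mem_cons_of_mem hx)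
    have hprev := ih hw
    have hbw : ∀ x ∈ b + w, 0 ≤ x := by
      intro x hx
      rcases Multiset.mem_add.mp hx with hx | hx
      · exact hb x hx
      · exact (hw x hx).le
    rw [Multiset.add_cons]
    intro i hik
    match i with
    | 0 =>
      rw [esymm_zero', show (0:ℕ)+1 = 0+1 from rfl, esymm_cons, esymm_zero']
      have h0 := hprev 0 (Nat.zero_le k)
      rw [esymm_zero'] at h0
      linarith
    | i + 1 =>
      rw [esymm_cons, esymm_cons]
      have h1 := hprev (i+1) hik
      have h2 := hprev i (by omega)
      nlinarith

lemma esymm_map_div (α : ℝ) (hα : 0 < α) :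
    ∀ (s : Multiset ℝ), (∀ x ∈ s, 0 < x) → ∀ j, j ≤ Multiset.card s →
      (s.map (fun x => α / x)).esymm j
        = α ^ j * s.esymm (Multiset.card s - j) / s.prod := by
  intro s
  induction s using Multiset.induction with
  | empty =>
    intro _ j hj
    simp at hj
    subst hj
    simp [esymm_zero']
  | cons a s ih =>
    intro hpos j hj
    have ha : 0 < a := hpos a (Multiset.mem_cons_self a s)
    have hs : ∀ x ∈ s, 0 < x := fun x hx => hpos x (Multiset.mem_cons_of_mem hx)
    have hprod : 0 < s.prod := Multiset.prod_pos hs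
    rw [Multiset.card_cons] at hj
    rw [Multiset.map_cons, Multiset.card_cons, Multiset.prod_cons]
    match j with
    | 0 =>
      rw [esymm_zero']
      rw [show Multiset.card s + 1 - 0 = Multiset.card s + 1 from rfl]
      rw [show (Multiset.card s + 1) = Multiset.card (a ::ₘ s) by rw [Multiset.card_cons]]
      rw [esymm_card, Multiset.prod_cons]
      field_simp
    | j + 1 =>
      rw [esymm_cons]
      rcases Nat.lt_or_ge j (Multiset.card s) with hlt | hge
      · -- j + 1 ≤ card s
        rw [ih hs (j+1) hlt, ih hs j (by omega)]
        have hsub1 : Multiset.card s + 1 - (j + 1) = (Multiset.card s - (j+1)) + 1 := by omega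
        rw [hsub1, esymm_cons]
        have hsub2 : Multiset.card s - (j + 1) + 1 = Multiset.card s - j := by omega
        rw [hsub2]
        rw [show Multiset.card s - (j+1) = Multiset.card s - j - 1 from by omega]
        field_simp
        ring
      · -- j = card s
        have hje : j = Multiset.card s := by omega
        subst hje
        rw [ih hs (Multiset.card s) le_rfl]
        rw [esymm_of_card_lt (by rw [Multiset.card_map]; omega)]
        simp only [Nat.sub_self, esymm_zero']
        field_simp
        ring

lemma core (s : Multiset ℝ) (hpos : ∀ x ∈ s, 0 < x) (k : ℕ)
    (hk : 2 * k + 1 ≤ Multiset.card (s.filter (fun x => (1:ℝ) < x))) :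
    s.esymm k < s.esymm (k + 1) := by
  classical
  set b := s.filter (fun x => (1:ℝ) < x) with hbdef
  set r := s.filter (fun x => ¬ (1:ℝ) < x) with hrdef
  have hsplit : b + r = s := Multiset.filter_add_not _ s
  have hbmem : ∀ x ∈ b, 1 < x := fun x hx => (Multiset.mem_filter.mp hx).2
  have hrmem : ∀ x ∈ r, 0 < x := fun x hx => hpos x (Multiset.mem_filter.mp hx).1
  have hbase : ∀ i ≤ k, b.esymm i < b.esymm (i + 1) := by
    intro i hik
    obtain ⟨c, hc⟩ : ∃ c, i + c + 1 = Multiset.card b := ⟨Multiset.card b - i - 1, by omega⟩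
    have hS := lemS b hbmem i c hc
    have hci : (i : ℝ) ≤ (c : ℝ) := by
      have hcb : Multiset.card b = i + c + 1 := hc.symm
      have : i ≤ c := by omega
      exact_mod_cast this
    have hnn : (0:ℝ) ≤ b.esymm i := esymm_nonneg (fun x hx => (hbmem x hx).le.trans' (by norm_num)) i
    nlinarith
  have hb0 : ∀ x ∈ b, (0:ℝ) ≤ x := fun x hx => (hbmem x hx).le.trans' (by norm_num)
  have := inc_add r hrmem b hb0 k hbase k le_rfl
  rwa [hsplit] at this

lemma pow_cross {β β' : ℝ} (hβ : 0 < β) (h : β < β') {i j : ℕ} (hij : j < i) :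
    β ^ i * β' ^ j < β' ^ i * β ^ j := by
  have hβ' : 0 < β' := lt_trans hβ h
  obtain ⟨k, rfl⟩ : ∃ k, i = j + (k + 1) := ⟨i - j - 1, by omega⟩
  have h1 : β ^ (k + 1) < β' ^ (k + 1) := by
    apply pow_lt_pow_left₀ h hβ.le
    omega
  have h2 : 0 < β ^ j * β' ^ j := mul_pos (pow_pos hβ j) (pow_pos hβ' j)
  calc β ^ (j + (k+1)) * β' ^ j = (β ^ j * β' ^ j) * β ^ (k+1) := by ring
    _ < (β ^ j * β' ^ j) * β' ^ (k+1) := by exact mul_lt_mul_of_pos_left h1 h2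
    _ = β' ^ (j + (k+1)) * β ^ j := by ring

lemma two_point (I J : Finset ℕ) (c e : ℕ → ℝ) (hc : ∀ i ∈ I, 0 < c i)
    (he : ∀ j ∈ J, 0 < e j) (hIJ : ∀ i ∈ I, ∀ j ∈ J, j < i)
    (hI : I.Nonempty) (hJ : J.Nonempty)
    {β β' : ℝ} (hβ : 0 < β) (hββ' : β < β') :
    (∑ i ∈ I, c i * β ^ i) * (∑ j ∈ J, e j * β' ^ j)
      < (∑ i ∈ I, c i * β' ^ i) * (∑ j ∈ J, e j * β ^ j) := by
  rw [Finset.sum_mul_sum, Finset.sum_mul_sum]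
  apply Finset.sum_lt_sum_of_nonempty hI
  intro i hi
  apply Finset.sum_lt_sum_of_nonempty hJ
  intro j hj
  have hcross := pow_cross hβ hββ' (hIJ i hi j hj)
  have := mul_pos (hc i hi) (he j hj)
  calc c i * β ^ i * (e j * β' ^ j) = (c i * e j) * (β ^ i * β' ^ j) := by ring
    _ < (c i * e j) * (β' ^ i * β ^ j) := by exact mul_lt_mul_of_pos_left hcross this
    _ = c i * β' ^ i * (e j * β ^ j) := by ring

lemma one_point (I J : Finset ℕ) (c e : ℕ → ℝ) (hc : ∀ i ∈ I, 0 < c i)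
    (he : ∀ j ∈ J, 0 < e j) (hIJ : ∀ i ∈ I, ∀ j ∈ J, j < i)
    (hI : I.Nonempty) (hJ : J.Nonempty)
    {α : ℝ} (hα : 0 < α) :
    (∑ j ∈ J, e j * ((j : ℝ) * α ^ (j - 1))) * (∑ i ∈ I, c i * α ^ i)
      < (∑ i ∈ I, c i * ((i : ℝ) * α ^ (i - 1))) * (∑ j ∈ J, e j * α ^ j) := by
  rw [Finset.sum_mul_sum, Finset.sum_mul_sum]
  rw [Finset.sum_comm]
  apply Finset.sum_lt_sum_of_nonempty hI
  intro i hi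
  apply Finset.sum_lt_sum_of_nonempty hJ
  intro j hj
  have hij := hIJ i hi j hj
  have hce := mul_pos (hc i hi) (he j hj)
  have hkey : (j : ℝ) * α ^ (j - 1) * α ^ i < (i : ℝ) * α ^ (i - 1) * α ^ j := by
    match j, hij with
    | 0, hij =>
      simp only [Nat.cast_zero, zero_mul]
      have hi0 : 0 < i := hij
      have : 0 < (i:ℝ) := by exact_mod_cast hi0
      positivity
    | j + 1, hij =>
      have hexp : (j + 1) - 1 + i = (i - 1) + (j + 1) := by omega
      have hji : ((j:ℝ) + 1) < (i : ℝ) := by exact_mod_cast hij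
      calc ((j+1 : ℕ) : ℝ) * α ^ ((j+1) - 1) * α ^ i = ((j:ℝ)+1) * α ^ ((j+1) - 1 + i) := by
            push_cast; rw [pow_add]; ring
        _ = ((j:ℝ)+1) * α ^ ((i-1) + (j+1)) := by rw [hexp]
        _ < (i:ℝ) * α ^ ((i-1) + (j+1)) := by
            exact mul_lt_mul_of_pos_right hji (pow_pos hα _)
        _ = (i:ℝ) * α ^ (i - 1) * α ^ (j+1) := by rw [pow_add]; ring
  calc e j * ((j:ℝ) * α ^ (j-1)) * (c i * α ^ i)
        = (c i * e j) * ((j:ℝ) * α ^ (j-1) * α ^ i) := by ring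
    _ < (c i * e j) * ((i:ℝ) * α ^ (i-1) * α ^ j) := by exact mul_lt_mul_of_pos_left hkey hce
    _ = c i * ((i:ℝ) * α ^ (i - 1)) * (e j * α ^ j) := by ring

end StmtAux

open StmtAux

/-- For a monic hyperbolic polynomial of degree `d` with all coefficients
nonzero, whose coefficient sign sequence is `m` pluses followed by `n` minuses
(`m + n = d + 1`, `1 ≤ n ≤ m`), the number of negative roots whose modulus is strictly
less than the modulus of the (unique) positive root is at most `2n - 2`. -/
theorem stmt0 (d m n : ℕ) (P : Polynomial ℝ)
    (hmonic : P.Monic) (hdeg : P.natDegree = d)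
    (hhyp : Multiset.card P.roots = d)
    (hmn : m + n = d + 1) (hn1 : 1 ≤ n) (hnm : n ≤ m)
    (hsign : ∀ j ≤ d, (n ≤ j → 0 < P.coeff j) ∧ (j < n → P.coeff j < 0))
    (α : ℝ) (hα : α ∈ P.roots) (hαpos : 0 < α) :
    Multiset.card (P.roots.filter (fun x => x < 0 ∧ |x| < α)) ≤ 2 * n - 2 := by
  classical
  have hP0 : P ≠ 0 := hmonic.ne_zero
  have hd1 : 1 ≤ d := by omega
  have hnd : n ≤ d := by omega
  -- eval decompositions
  have heval : ∀ x : ℝ, P.eval x =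
      (∑ i ∈ Finset.Ico n (d+1), P.coeff i * x ^ i)
        - (∑ j ∈ Finset.range n, (-(P.coeff j)) * x ^ j) := by
    intro x
    have h1 : P.eval x = ∑ i ∈ Finset.range (d+1), P.coeff i * x ^ i :=
      Polynomial.eval_eq_sum_range' (by omega) x
    rw [h1, Finset.range_eq_Ico,
      ← Finset.sum_Ico_consecutive _ (Nat.zero_le n) (by omega : n ≤ d+1)]
    have h2 : ∑ j ∈ Finset.Ico 0 n, (-(P.coeff j)) * x ^ j
        = - ∑ j ∈ Finset.Ico 0 n, P.coeff j * x ^ j := by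
      rw [← Finset.sum_neg_distrib]
      exact Finset.sum_congr rfl fun j _ => by ring
    rw [Finset.range_eq_Ico, h2]
    ring
  have hder : ∀ x : ℝ, P.derivative.eval x =
      (∑ i ∈ Finset.Ico n (d+1), P.coeff i * ((i : ℝ) * x ^ (i-1)))
        - (∑ j ∈ Finset.range n, (-(P.coeff j)) * ((j : ℝ) * x ^ (j-1))) := by
    intro x
    have hps : P = ∑ i ∈ Finset.range (d+1), monomial i (P.coeff i) :=
      P.as_sum_range' (d+1) (by omega)
    have h1 : P.derivative.eval x
        = ∑ i ∈ Finset.range (d+1), P.coeff i * ((i : ℝ) * x ^ (i-1)) := by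
      conv_lhs => rw [hps]
      rw [derivative_sum, Polynomial.eval_finset_sum]
      refine Finset.sum_congr rfl fun i _ => ?_
      rw [Polynomial.derivative_monomial, Polynomial.eval_monomial]
      ring
    rw [h1, Finset.range_eq_Ico,
      ← Finset.sum_Ico_consecutive _ (Nat.zero_le n) (by omega : n ≤ d+1)]
    have h2 : ∑ j ∈ Finset.Ico 0 n, (-(P.coeff j)) * ((j:ℝ) * x ^ (j-1))
        = - ∑ j ∈ Finset.Ico 0 n, P.coeff j * ((j:ℝ) * x ^ (j-1)) := by
      rw [← Finset.sum_neg_distrib]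
      exact Finset.sum_congr rfl fun j _ => by ring
    rw [Finset.range_eq_Ico, h2]
    ring
  have hcpos : ∀ i ∈ Finset.Ico n (d+1), 0 < P.coeff i := by
    intro i hi
    have hi' := Finset.mem_Ico.mp hi
    exact (hsign i (by omega)).1 hi'.1
  have hepos : ∀ j ∈ Finset.range n, 0 < -(P.coeff j) := by
    intro j hj
    have hj' := Finset.mem_range.mp hj
    have := (hsign j (by omega)).2 hj'
    linarith
  have hIJ : ∀ i ∈ Finset.Ico n (d+1), ∀ j ∈ Finset.range n, j < i := by
    intro i hi j hj
    have hi' := Finset.mem_Ico.mp hi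
    have hj' := Finset.mem_range.mp hj
    omega
  have hIne : (Finset.Ico n (d+1)).Nonempty := ⟨n, Finset.mem_Ico.mpr ⟨le_rfl, by omega⟩⟩
  have hJne : (Finset.range n).Nonempty := ⟨0, Finset.mem_range.mpr (by omega)⟩
  have hroot_eq : ∀ x : ℝ, P.IsRoot x →
      ∑ i ∈ Finset.Ico n (d+1), P.coeff i * x ^ i
        = ∑ j ∈ Finset.range n, (-(P.coeff j)) * x ^ j := by
    intro x hx
    have h1 := heval x
    rw [Polynomial.IsRoot] at hx
    rw [hx] at h1
    linarith
  have hαroot : P.IsRoot α := ((Polynomial.mem_roots hP0).mp hα)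
  -- all roots besides α are negative
  have honeg : ∀ x ∈ P.roots.erase α, x < 0 := by
    intro x hxe
    have hxr : x ∈ P.roots := Multiset.mem_of_mem_erase hxe
    have hxroot : P.IsRoot x := (Polynomial.mem_roots hP0).mp hxr
    by_contra hcon
    push_neg at hcon
    have hx0 : x ≠ 0 := by
      intro h0
      subst h0
      have h1 : P.coeff 0 < 0 := (hsign 0 (by omega)).2 (by omega)
      rw [Polynomial.coeff_zero_eq_eval_zero] at h1
      rw [Polynomial.IsRoot] at hxroot
      linarith
    have hxpos : 0 < x := lt_of_le_of_ne hcon (Ne.symm hx0)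
    rcases eq_or_ne x α with rfl | hne
    · -- x = α : multiplicity at least 2
      have hcount2 : 2 ≤ P.roots.count x := by
        have h1 : 0 < (P.roots.erase x).count x := Multiset.count_pos.mpr hxe
        have h2 := Multiset.count_erase_self x P.roots
        omega
      have hmult : 2 ≤ P.rootMultiplicity x := by
        rwa [Polynomial.count_roots] at hcount2
      have hderiv0 : P.derivative.eval x = 0 := by
        have h1 := Polynomial.derivative_rootMultiplicity_of_root hxroot
        have h2 : 0 < P.derivative.rootMultiplicity x := by omega
        have h3 : P.derivative ≠ 0 := by
          intro h
          rw [h, Polynomial.rootMultiplicity_zero] at h2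
          omega
        exact (Polynomial.rootMultiplicity_pos h3).mp h2
      have hEq1 := hroot_eq x hxroot
      have hEq2 : ∑ i ∈ Finset.Ico n (d+1), P.coeff i * ((i:ℝ) * x ^ (i-1))
          = ∑ j ∈ Finset.range n, (-(P.coeff j)) * ((j:ℝ) * x ^ (j-1)) := by
        have h1 := hder x
        rw [hderiv0] at h1
        linarith
      have hop := one_point (Finset.Ico n (d+1)) (Finset.range n) _ _
        hcpos hepos hIJ hIne hJne hxpos
      rw [hEq1, hEq2] at hop
      exact lt_irrefl _ hop
    · rcases hne.lt_or_gt with hlt | hlt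
      · have h2p := two_point (Finset.Ico n (d+1)) (Finset.range n) _ _
          hcpos hepos hIJ hIne hJne hxpos hlt
        rw [hroot_eq x hxroot, hroot_eq α hαroot, mul_comm] at h2p
        exact lt_irrefl _ h2p
      · have h2p := two_point (Finset.Ico n (d+1)) (Finset.range n) _ _
          hcpos hepos hIJ hIne hJne hαpos hlt
        rw [hroot_eq x hxroot, hroot_eq α hαroot, mul_comm] at h2p
        exact lt_irrefl _ h2p
  -- factorization
  have hsplits : P.Splits :=
    (Polynomial.splits_iff_card_roots).mpr (by rw [hhyp, hdeg])
  have hfact := hsplits.eq_prod_roots_of_monic hmonic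
  set M0 := P.roots.erase α with hM0def
  have hcons : P.roots = α ::ₘ M0 := (Multiset.cons_erase hα).symm
  have hM0card : Multiset.card M0 = d - 1 := by
    rw [hM0def, Multiset.card_erase_of_mem hα, hhyp]
    rfl
  -- trivial case m = 1
  rcases Nat.lt_or_ge m 2 with hm1 | hm2
  · have hn1' : n = 1 := by omega
    have hd1' : d = 1 := by omega
    have hM00 : M0 = 0 := Multiset.card_eq_zero.mp (by omega)
    rw [hcons, hM00]
    rw [Multiset.filter_cons_of_neg _ (by push_neg; intro h; linarith)]
    simp
  -- main case
  have hnd1 : n ≤ d - 1 := by omega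
  set γM := M0.map (fun x => -x) with hγMdef
  have hγM : ∀ g ∈ γM, 0 < g := by
    intro g hg
    obtain ⟨x, hx, rfl⟩ := Multiset.mem_map.mp hg
    have := honeg x hx
    linarith
  have hγMcard : Multiset.card γM = d - 1 := by rw [hγMdef, Multiset.card_map, hM0card]
  set G := (M0.map (fun x => X - C x)).prod with hGdef
  have hPfact : P = (X - C α) * G := by
    rw [hfact, hcons, Multiset.map_cons, Multiset.prod_cons]
  have hGγ : G = (γM.map (fun g => X + C g)).prod := by
    rw [hγMdef, Multiset.map_map, hGdef]
    apply congrArg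
    apply Multiset.map_congr rfl
    intro x _
    simp [sub_eq_add_neg]
  have hcoeffG : ∀ j, j ≤ d - 1 → G.coeff j = γM.esymm (d - 1 - j) := by
    intro j hj
    rw [hGγ, Multiset.prod_X_add_C_coeff γM (by rw [hγMcard]; exact hj), hγMcard]
  have hpn : 0 < P.coeff n := (hsign n hnd).1 le_rfl
  have hPn : P.coeff n = G.coeff (n-1) - α * G.coeff n := by
    have hxg : (X * G).coeff n = G.coeff (n-1) := by
      obtain ⟨n', rfl⟩ : ∃ n', n = n' + 1 := ⟨n-1, by omega⟩
      rw [Polynomial.coeff_X_mul]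
      congr 1
    rw [hPfact, sub_mul, Polynomial.coeff_sub, Polynomial.coeff_C_mul, hxg]
  have hkey : α * γM.esymm (d-1-n) < γM.esymm (d-1-(n-1)) := by
    have h1 := hpn
    rw [hPn, hcoeffG (n-1) (by omega), hcoeffG n hnd1] at h1
    linarith
  set ν := γM.map (fun x => α / x) with hνdef
  have hνpos : ∀ x ∈ ν, 0 < x := by
    intro x hx
    obtain ⟨g, hg, rfl⟩ := Multiset.mem_map.mp hx
    exact div_pos hαpos (hγM g hg)
  have hprodpos : 0 < γM.prod := Multiset.prod_pos hγM
  have hesym : ∀ j, j ≤ d - 1 → ν.esymm j = α ^ j * γM.esymm (d-1-j) / γM.prod := by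
    intro j hj
    have := esymm_map_div α hαpos γM hγM j (by rw [hγMcard]; exact hj)
    rwa [hγMcard] at this
  have hdec : ν.esymm n < ν.esymm (n-1) := by
    rw [hesym n hnd1, hesym (n-1) (by omega)]
    have hpow : α ^ n = α ^ (n-1) * α := by
      rw [← pow_succ]
      congr 1
      omega
    have h2 : α ^ n * γM.esymm (d-1-n) < α ^ (n-1) * γM.esymm (d-1-(n-1)) := by
      rw [hpow, mul_assoc]
      exact mul_lt_mul_of_pos_left hkey (pow_pos hαpos _)
    rw [div_lt_div_iff₀ hprodpos hprodpos]
    exact mul_lt_mul_of_pos_right h2 hprodpos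
  have hfiltercount : Multiset.card (ν.filter (fun x => (1:ℝ) < x)) ≤ 2 * (n-1) := by
    by_contra hcon
    push_neg at hcon
    have hcore := core ν hνpos (n-1) (by omega)
    rw [show n - 1 + 1 = n from by omega] at hcore
    linarith
  -- count translations
  have t1 : ν.filter (fun x => (1:ℝ) < x)
      = (γM.filter (fun x => (1:ℝ) < α / x)).map (fun x => α / x) := by
    rw [hνdef, Multiset.filter_map]
    rfl
  have t2 : γM.filter (fun x => (1:ℝ) < α / x) = γM.filter (fun x => x < α) :=
    Multiset.filter_congr (fun x hx => by rw [one_lt_div (hγM x hx)])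
  have t3 : γM.filter (fun x => x < α) = (M0.filter (fun x => -x < α)).map (fun x => -x) := by
    rw [hγMdef, Multiset.filter_map]
    rfl
  have t4 : M0.filter (fun x => -x < α) = M0.filter (fun x => x < 0 ∧ |x| < α) := by
    apply Multiset.filter_congr
    intro x hx
    have hneg := honeg x hx
    rw [abs_of_neg hneg]
    constructor
    · intro h; exact ⟨hneg, h⟩
    · intro h; exact h.2
  have t5 : P.roots.filter (fun x => x < 0 ∧ |x| < α)
      = M0.filter (fun x => x < 0 ∧ |x| < α) := by
    rw [hcons, Multiset.filter_cons_of_neg _ (by push_neg; intro h; linarith)]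
  calc Multiset.card (P.roots.filter (fun x => x < 0 ∧ |x| < α))
      = Multiset.card (M0.filter (fun x => x < 0 ∧ |x| < α)) := by rw [t5]
    _ = Multiset.card (M0.filter (fun x => -x < α)) := by rw [t4]
    _ = Multiset.card (γM.filter (fun x => x < α)) := by rw [t3, Multiset.card_map]
    _ = Multiset.card (γM.filter (fun x => (1:ℝ) < α / x)) := by rw [t2]
    _ = Multiset.card (ν.filter (fun x => (1:ℝ) < x)) := by rw [t1, Multiset.card_map]
    _ ≤ 2 * (n - 1) := hfiltercount
    _ ≤ 2 * n - 2 := by omega
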